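/- Let $\{G_n\}_{n\in\mathbb{N}}$ be a family of compact groups with $G_n \subseteq G_{n+1}$, and let $\{(V_n, \varphi_n)\}$ be a consistent sequence of orthogonal $G_n$-representations generated in degree $d$ (i.e., $\mathrm{span}\{g \cdot v : g \in G_n, v \in V_d\} = V_n$ for all $n \geq d$). Then for all $n \geq d$, the orthogonal projection $\mathcal{P}_{V_n} : V_{n+1}^{G_{n+1}} \to V_n^{G_n}$ restricted to invariant vectors is injective. -/

import Mathlib

open scoped RealInnerProductSpace

/-- For a consistent sequence of orthogonal `G n`-representations
(modelled as nested submodules `V n` of an ambient real inner product space `H`,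
with the groups `G n` realized inside an abstract group `Γ` acting by linear isometries
via `ρ`, the action of `G n` preserving `V m` for `m ≥ n`), generated in degree `d`,
the orthogonal projection onto `V n` is injective on `G (n+1)`-invariant vectors of
`V (n+1)`, for every `n ≥ d`. -/
theorem projection_injective_on_invariants
    {Γ : Type*} [Group Γ] (G : ℕ → Subgroup Γ) (hG : ∀ n, G n ≤ G (n + 1))
    {H : Type*} [NormedAddCommGroup H] [InnerProductSpace ℝ H] [FiniteDimensional ℝ H]
    (ρ : Γ →* (H ≃ₗᵢ[ℝ] H))
    (V : ℕ → Submodule ℝ H) (hV : ∀ n, V n ≤ V (n + 1))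
    (hact : ∀ n m, n ≤ m → ∀ g ∈ G n, ∀ v ∈ V m, ρ g v ∈ V m)
    (d : ℕ)
    (hgen : ∀ n, d ≤ n →
      V n = Submodule.span ℝ {x : H | ∃ g ∈ G n, ∃ v ∈ V d, x = ρ g v})
    (n : ℕ) (hn : d ≤ n) :
    ∀ v w : H, v ∈ V (n + 1) → w ∈ V (n + 1) →
      (∀ g ∈ G (n + 1), ρ g v = v) → (∀ g ∈ G (n + 1), ρ g w = w) →
      Submodule.orthogonalProjectionOnto (V n) v = Submodule.orthogonalProjectionOnto (V n) w → v = w := by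
  have hmono : ∀ a b : ℕ, a ≤ b → V a ≤ V b := by
    intro a b hab
    induction hab with
    | refl => exact le_rfl
    | step _ ih => exact le_trans ih (hV _)
  intro v w hv hw hvi hwi hproj
  set u := v - w with hu_def
  have hu : u ∈ V (n + 1) := sub_mem hv hw
  have hui : ∀ g ∈ G (n + 1), ρ g u = u := by
    intro g hg
    simp [hu_def, map_sub, hvi g hg, hwi g hg]
  -- u is orthogonal to V n
  have hperp : ∀ x ∈ V n, ⟪u, x⟫ = 0 := by
    intro x hx
    have h0 : (Submodule.orthogonalProjectionOnto (V n) u : H) = 0 := by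
      have : Submodule.orthogonalProjectionOnto (V n) u = 0 := by
        rw [hu_def, map_sub, hproj, sub_self]
      simp [this]
    have : u - (Submodule.orthogonalProjectionOnto (V n) u : H) ∈ (V n)ᗮ := Submodule.sub_starProjection_mem_orthogonal (K := V n) u
    rw [h0, sub_zero] at this
    exact (Submodule.mem_orthogonal' (V n) u).mp this x hx
  -- u is orthogonal to all generators of V (n+1), hence to V (n+1)
  have hperp' : ∀ x ∈ V (n + 1), ⟪u, x⟫ = 0 := by
    intro x hx
    rw [hgen (n + 1) (le_trans hn (Nat.le_succ n))] at hx
    induction hx using Submodule.span_induction with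
    | mem x hxmem =>
        obtain ⟨g, hg, z, hz, rfl⟩ := hxmem
        calc ⟪u, ρ g z⟫ = ⟪ρ g u, ρ g z⟫ := by rw [hui g hg]
          _ = ⟪u, z⟫ := (ρ g).inner_map_map u z
          _ = 0 := hperp z (hmono d n hn hz)
    | zero => simp
    | add x y _ _ hx hy => rw [inner_add_right, hx, hy, add_zero]
    | smul c x _ hx => rw [inner_smul_right, hx, mul_zero]
  have : u = 0 := by
    have := hperp' u hu
    exact inner_self_eq_zero.mp this
  exact sub_eq_zero.mp this
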